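/- Let G be a finite simple graph, let P be a longest path in G, let H be a connected component of G − V(P), and let k be the number of attachment points of H on P. Then there exists an independent set A of G with A ⊆ V(P), |A| ≥ k + 1, such that no edge of G joins a vertex of A and a vertex of H. -/

import Mathlib

open SimpleGraph

/-- `p` is a longest path in the graph `G`. -/
def IsLongestPath {V : Type} (G : SimpleGraph V) {u v : V} (p : G.Walk u v) : Prop :=
  p.IsPath ∧ ∀ (a b : V) (q : G.Walk a b), q.IsPath → q.length ≤ p.length

/-- The attachment points on `p` of the component `C` of `G - V(p)`: the vertices of
`p` having a neighbor in `C`. -/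
def attachPoints {V : Type} (G : SimpleGraph V) {x y : V} (p : G.Walk x y)
    (C : (G.induce {v : V | v ∉ p.support}).ConnectedComponent) : Set V :=
  {s : V | s ∈ p.support ∧ ∃ h : {v : V | v ∉ p.support},
    (G.induce {v : V | v ∉ p.support}).connectedComponentMk h = C ∧ G.Adj ↑h s}

theorem exists_walk_of_chain' {V : Type} (G : SimpleGraph V) :
    ∀ (l : List V) (a : V), List.Chain G.Adj a l →
      ∃ w : G.Walk a (l.getLastD a), w.support = a :: l := by
  intro l
  induction l with
  | nil => exact fun a _ => ⟨Walk.nil, rfl⟩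
  | cons b t ih =>
    intro a h
    have h : List.IsChain G.Adj (a :: b :: t) := h
    rw [List.isChain_cons_cons] at h
    obtain ⟨w, hw⟩ := ih b h.2
    rw [List.getLastD_cons]
    exact ⟨Walk.cons h.1 w, by rw [Walk.support_cons, hw]⟩

theorem key_maxlen {V : Type} {G : SimpleGraph V} {x y : V} {p : G.Walk x y}
    (hp : IsLongestPath G p) (l : List V) (hne : l ≠ []) (hc : l.Chain' G.Adj)
    (hn : l.Nodup) : l.length ≤ p.support.length := by
  obtain ⟨a, t, rfl⟩ := List.exists_cons_of_ne_nil hne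
  have hct : List.Chain G.Adj a t := hc
  obtain ⟨w, hw⟩ := exists_walk_of_chain' G t a hct
  have hpath : w.IsPath := by rw [SimpleGraph.Walk.isPath_def, hw]; exact hn
  have h2 := hp.2 _ _ w hpath
  have h3 : w.length + 1 = w.support.length := (SimpleGraph.Walk.length_support w).symm
  rw [hw] at h3
  rw [SimpleGraph.Walk.length_support]
  simp only [List.length_cons] at h3 ⊢
  omega

theorem my_getLast?_take {α : Type} (l : List α) (n : ℕ) (h : n < l.length) :
    (l.take (n+1)).getLast? = some l[n] := by
  rw [List.take_succ, List.getElem?_eq_getElem h, Option.toList_some]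
  rw [List.getLast?_append_cons]; rfl

theorem my_head?_drop {α : Type} (l : List α) (n : ℕ) (h : n < l.length) :
    (l.drop n).head? = some l[n] := by
  rw [List.head?_drop, List.getElem?_eq_getElem h]

theorem my_head?_take {α : Type} (l : List α) (n : ℕ) (h : 0 < l.length) :
    (l.take (n+1)).head? = some (l[0]'h) := by
  obtain ⟨a, t, rfl⟩ := List.exists_cons_of_ne_nil (List.ne_nil_of_length_pos h)
  simp

theorem comp_path {V : Type} (G : SimpleGraph V) {x y : V} (p : G.Walk x y)
    (C : (G.induce {v : V | v ∉ p.support}).ConnectedComponent)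
    (h₁ h₂ : {v : V | v ∉ p.support})
    (e₁ : (G.induce {v : V | v ∉ p.support}).connectedComponentMk h₁ = C)
    (e₂ : (G.induce {v : V | v ∉ p.support}).connectedComponentMk h₂ = C) :
    ∃ M : List V, M.head? = some ↑h₁ ∧ M.getLast? = some ↑h₂ ∧ M.Chain' G.Adj ∧
      M.Nodup ∧ M ≠ [] ∧ ∀ v ∈ M, v ∉ p.support := by
  classical
  have hr : (G.induce {v : V | v ∉ p.support}).Reachable h₁ h₂ :=
    ConnectedComponent.exact (e₁.trans e₂.symm)
  obtain ⟨w⟩ := hr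
  refine ⟨(w.toPath : (G.induce {v : V | v ∉ p.support}).Walk h₁ h₂).support.map Subtype.val,
    ?_, ?_, ?_, ?_, ?_, ?_⟩
  · rw [(w.toPath : (G.induce _).Walk h₁ h₂).support_eq_cons]; rfl
  · rw [List.getLast?_eq_getLast
      (fun h => (w.toPath : (G.induce _).Walk h₁ h₂).support_ne_nil (List.map_eq_nil_iff.1 h))]
    rw [List.getLast_map]
    · rw [Walk.getLast_support]
  · show List.IsChain G.Adj _
    rw [List.isChain_map]
    exact ((w.toPath : (G.induce _).Walk h₁ h₂).isChain_adj_support).imp (fun a b hab => hab)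
  · exact ((w.toPath).2.support_nodup).map Subtype.val_injective
  · exact fun h => (w.toPath : (G.induce _).Walk h₁ h₂).support_ne_nil (List.map_eq_nil_iff.1 h)
  · intro v hv
    simp only [List.mem_map] at hv
    obtain ⟨u, _, rfl⟩ := hv
    exact u.2

theorem indep_set_of_longest_path
    {V : Type} [Fintype V] (G : SimpleGraph V) {x y : V}
    (p : G.Walk x y) (hp : IsLongestPath G p)
    (C : (G.induce {v : V | v ∉ p.support}).ConnectedComponent) :
    ∃ A : Finset V,
      (∀ a ∈ A, ∀ b ∈ A, a ≠ b → ¬ G.Adj a b) ∧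
      (∀ a ∈ A, a ∈ p.support) ∧
      (attachPoints G p C).ncard + 1 ≤ A.card ∧
      (∀ a ∈ A, ∀ h : {v : V | v ∉ p.support},
        (G.induce {v : V | v ∉ p.support}).connectedComponentMk h = C → ¬ G.Adj a ↑h) := by
  classical
  have hnd : p.support.Nodup := hp.1.support_nodup
  have hch : p.support.Chain' G.Adj := p.isChain_adj_support
  have hKey : ∀ l : List V, l ≠ [] → l.Chain' G.Adj → l.Nodup →
      l.length ≤ p.support.length := fun l => key_maxlen hp l
  have hn0 : 0 < p.support.length := by
    rw [p.length_support]; omega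
  have h0' : p.support[0]? = some x := by rw [p.support_eq_cons]; simp
  have h0 : p.support[0]'hn0 = x := by
    rw [List.getElem?_eq_getElem hn0] at h0'
    exact Option.some.inj h0'
  have hlast : p.support[p.support.length - 1]'(by omega) = y := by
    rw [← List.getLast_eq_getElem p.support_ne_nil]
    exact p.getLast_support
  -- y is not an attachment point
  have hyS : y ∉ attachPoints G p C := by
    rintro ⟨-, h, -, hadj⟩
    have hc : (p.support ++ [(h : V)]).Chain' G.Adj := by
      refine hch.append (List.isChain_singleton _) ?_
      intro a ha b hb
      rw [List.getLast?_eq_getLast p.support_ne_nil, p.getLast_support] at ha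
      simp only [List.head?_cons, Option.mem_def, Option.some.injEq] at ha hb
      rw [← ha, ← hb]
      exact hadj.symm
    have hndl : (p.support ++ [(h : V)]).Nodup := by
      refine hnd.append (List.nodup_singleton _) ?_
      intro a ha hb
      simp only [List.mem_singleton] at hb
      exact h.2 (hb ▸ ha)
    have := hKey _ (by simp) hc hndl
    simp at this
  have hxS : x ∉ attachPoints G p C := by
    rintro ⟨-, h, -, hadj⟩
    have hc : ((h : V) :: p.support).Chain' G.Adj := by
      show List.IsChain G.Adj _
      rw [List.isChain_cons]
      refine ⟨?_, hch⟩
      intro b hb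
      rw [p.support_eq_cons] at hb
      simp only [List.head?_cons, Option.mem_def, Option.some.injEq] at hb
      rw [← hb]
      exact hadj
    have hndl : ((h : V) :: p.support).Nodup := List.nodup_cons.2 ⟨h.2, hnd⟩
    have := hKey _ (by simp) hc hndl
    simp at this
  -- index facts
  have hidx : ∀ s ∈ attachPoints G p C, p.support.idxOf s < p.support.length :=
    fun s hs => List.idxOf_lt_length_iff.2 hs.1
  have hgetidx : ∀ s, ∀ hs : s ∈ attachPoints G p C,
      p.support[p.support.idxOf s]'(hidx s hs) = s :=
    fun s hs => List.getElem_idxOf (hidx s hs)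
  have hidx1 : ∀ s ∈ attachPoints G p C, p.support.idxOf s + 1 < p.support.length := by
    intro s hs
    have h1 := hidx s hs
    by_contra h
    have he : p.support.idxOf s = p.support.length - 1 := by omega
    have h2 := hgetidx s hs
    simp only [he] at h2
    rw [hlast] at h2
    exact hyS (h2 ▸ hs)
  -- the successor function
  set f : V → V := fun s => p.support.getD (p.support.idxOf s + 1) x with hfdef
  have hf : ∀ s, ∀ hs : s ∈ attachPoints G p C,
      f s = p.support[p.support.idxOf s + 1]'(hidx1 s hs) :=
    fun s hs => List.getD_eq_getElem _ _ (hidx1 s hs)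
  have hfmem : ∀ s ∈ attachPoints G p C, f s ∈ p.support := by
    intro s hs; rw [hf s hs]; exact List.getElem_mem _
  -- no neighbor of the successor of an attachment point lies in C
  have hGood : ∀ s ∈ attachPoints G p C, ∀ h : {v : V | v ∉ p.support},
      (G.induce {v : V | v ∉ p.support}).connectedComponentMk h = C → ¬ G.Adj (f s) ↑h := by
    intro s hs h hC hadj
    obtain ⟨hmem, h₀, hC₀, hadj₀⟩ := hs
    obtain ⟨M, hMh, hMl, hMc, hMnd, hMne, hMdisj⟩ := comp_path G p C h₀ h hC₀ hC
    set i := p.support.idxOf s with hidef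
    have hi : i < p.support.length := hidx s ⟨hmem, h₀, hC₀, hadj₀⟩
    have hi1 : i + 1 < p.support.length := hidx1 s ⟨hmem, h₀, hC₀, hadj₀⟩
    have hsi : p.support[i]'hi = s := hgetidx s ⟨hmem, h₀, hC₀, hadj₀⟩
    have hfs : f s = p.support[i+1]'hi1 := hf s ⟨hmem, h₀, hC₀, hadj₀⟩
    set T := p.support.take (i+1) with hTdef
    set D := p.support.drop (i+1) with hDdef
    have hsplit : p.support = T ++ D := (List.take_append_drop _ _).symm
    have hndTD := hsplit ▸ hnd
    rw [List.nodup_append] at hndTD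
    have hc : ((T ++ M) ++ D).Chain' G.Adj := by
      refine List.IsChain.append ?_ (hch.drop (i+1)) ?_
      · refine List.IsChain.append (hch.take (i+1)) hMc ?_
        intro a ha b hb
        rw [hTdef, my_getLast?_take _ _ hi] at ha
        rw [hMh] at hb
        simp only [Option.mem_def, Option.some.injEq] at ha hb
        rw [← ha, ← hb, hsi]
        exact hadj₀.symm
      · intro a ha b hb
        rw [List.getLast?_append_of_ne_nil _ hMne, hMl] at ha
        rw [hDdef, my_head?_drop _ _ hi1] at hb
        simp only [Option.mem_def, Option.some.injEq] at ha hb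
        rw [← ha, ← hb, ← hfs]
        exact hadj.symm
    have hndl : ((T ++ M) ++ D).Nodup := by
      refine List.Nodup.append (List.Nodup.append hndTD.1 hMnd ?_) hndTD.2.1 ?_
      · intro a ha hb
        exact hMdisj a hb (List.mem_of_mem_take ha)
      · intro a ha hb
        rcases List.mem_append.1 ha with h1 | h1
        · exact hndTD.2.2 a h1 a hb rfl
        · exact hMdisj a h1 (List.mem_of_mem_drop hb)
    have hlen := hKey _ (by
      intro he
      rw [List.append_eq_nil_iff, List.append_eq_nil_iff] at he
      exact hMne he.1.2) hc hndl
    have hMlen : 1 ≤ M.length := List.length_pos_iff.2 hMne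
    simp only [List.length_append, hTdef, hDdef, List.length_take, List.length_drop] at hlen
    omega
  -- x has no neighbor in C
  have hxC : ∀ h : {v : V | v ∉ p.support},
      (G.induce {v : V | v ∉ p.support}).connectedComponentMk h = C → ¬ G.Adj x ↑h := by
    intro h hC hadj
    exact hxS ⟨p.start_mem_support, h, hC, hadj.symm⟩
  -- x is not adjacent to any successor
  have hxf : ∀ s ∈ attachPoints G p C, ¬ G.Adj x (f s) := by
    intro s hs hadj
    obtain ⟨hmem, h₀, hC₀, hadj₀⟩ := hs
    set i := p.support.idxOf s with hidef
    have hi : i < p.support.length := hidx s ⟨hmem, h₀, hC₀, hadj₀⟩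
    have hi1 : i + 1 < p.support.length := hidx1 s ⟨hmem, h₀, hC₀, hadj₀⟩
    have hsi : p.support[i]'hi = s := hgetidx s ⟨hmem, h₀, hC₀, hadj₀⟩
    have hfs : f s = p.support[i+1]'hi1 := hf s ⟨hmem, h₀, hC₀, hadj₀⟩
    set T := p.support.take (i+1) with hTdef
    set D := p.support.drop (i+1) with hDdef
    have hsplit : p.support = T ++ D := (List.take_append_drop _ _).symm
    have hndTD := hsplit ▸ hnd
    rw [List.nodup_append] at hndTD
    have hTne : T ≠ [] := by
      rw [hTdef]
      apply List.ne_nil_of_length_pos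
      rw [List.length_take]
      omega
    have hc : ((h₀ : V) :: (T.reverse ++ D)).Chain' G.Adj := by
      show List.IsChain G.Adj _
      rw [List.isChain_cons]
      constructor
      · intro b hb
        rw [List.head?_append_of_ne_nil _ (by simpa using hTne)] at hb
        rw [List.head?_reverse, hTdef, my_getLast?_take _ _ hi] at hb
        simp only [Option.mem_def, Option.some.injEq] at hb
        rw [← hb, hsi]
        exact hadj₀
      · refine List.IsChain.append ?_ (hch.drop (i+1)) ?_
        · rw [List.isChain_reverse]
          exact (hch.take (i+1)).imp (fun a b hab => hab.symm)
        · intro a ha b hb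
          rw [List.getLast?_reverse, hTdef, my_head?_take _ _ hn0, h0] at ha
          rw [hDdef, my_head?_drop _ _ hi1] at hb
          simp only [Option.mem_def, Option.some.injEq] at ha hb
          rw [← ha, ← hb, ← hfs]
          exact hadj
    have hndl : ((h₀ : V) :: (T.reverse ++ D)).Nodup := by
      rw [List.nodup_cons]
      constructor
      · intro hmem'
        rcases List.mem_append.1 hmem' with h1 | h1
        · exact h₀.2 (List.mem_of_mem_take (List.mem_reverse.1 h1))
        · exact h₀.2 (List.mem_of_mem_drop h1)
      · refine List.Nodup.append (List.nodup_reverse.2 hndTD.1) hndTD.2.1 ?_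
        intro a ha hb
        exact hndTD.2.2 a (List.mem_reverse.1 ha) a hb rfl
    have hlen := hKey _ (by simp) hc hndl
    simp only [List.length_cons, List.length_append, List.length_reverse, hTdef, hDdef,
      List.length_take, List.length_drop] at hlen
    omega
  -- successors are pairwise non-adjacent
  have hff : ∀ s ∈ attachPoints G p C, ∀ t ∈ attachPoints G p C,
      p.support.idxOf s < p.support.idxOf t → ¬ G.Adj (f s) (f t) := by
    intro s hs t ht hlt hadj
    obtain ⟨hmems, hs₀, hCs₀, hadjs₀⟩ := hs
    obtain ⟨hmemt, ht₀, hCt₀, hadjt₀⟩ := ht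
    obtain ⟨M, hMh, hMl, hMc, hMnd, hMne, hMdisj⟩ := comp_path G p C hs₀ ht₀ hCs₀ hCt₀
    set i := p.support.idxOf s with hidef
    set j := p.support.idxOf t with hjdef
    have hi : i < p.support.length := hidx s ⟨hmems, hs₀, hCs₀, hadjs₀⟩
    have hi1 : i + 1 < p.support.length := hidx1 s ⟨hmems, hs₀, hCs₀, hadjs₀⟩
    have hj : j < p.support.length := hidx t ⟨hmemt, ht₀, hCt₀, hadjt₀⟩
    have hj1 : j + 1 < p.support.length := hidx1 t ⟨hmemt, ht₀, hCt₀, hadjt₀⟩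
    have hsi : p.support[i]'hi = s := hgetidx s ⟨hmems, hs₀, hCs₀, hadjs₀⟩
    have htj : p.support[j]'hj = t := hgetidx t ⟨hmemt, ht₀, hCt₀, hadjt₀⟩
    have hfs : f s = p.support[i+1]'hi1 := hf s ⟨hmems, hs₀, hCs₀, hadjs₀⟩
    have hft : f t = p.support[j+1]'hj1 := hf t ⟨hmemt, ht₀, hCt₀, hadjt₀⟩
    obtain ⟨d, hd⟩ : ∃ d, j = i + 1 + d := ⟨j - (i+1), by omega⟩
    set T := p.support.take (i+1) with hTdef
    set Dr := p.support.drop (i+1) with hDrdef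
    set Mid := Dr.take (d+1) with hMiddef
    set D := p.support.drop (j+1) with hDdef
    have hDrlen : Dr.length = p.support.length - (i+1) := by
      rw [hDrdef, List.length_drop]
    have hdlt : d < Dr.length := by omega
    have hDr0 : 0 < Dr.length := by omega
    have hDrD : Dr.drop (d+1) = D := by
      rw [hDrdef, hDdef, List.drop_drop]
      congr 1
      omega
    have hMidlast : Mid.getLast? = some t := by
      rw [hMiddef, my_getLast?_take _ _ hdlt]
      congr 1
      have e1 : Dr[d]'hdlt = p.support[i+1+d]'(hd ▸ hj) := List.getElem_drop ..
      rw [e1]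
      have e2 := htj
      simp only [hd] at e2
      exact e2
    have hMidhead : Mid.head? = some (f s) := by
      rw [hMiddef, my_head?_take _ _ hDr0, hfs]
      congr 1
      have e1 : Dr[0]'hDr0 = p.support[i+1+0]'(by omega) := List.getElem_drop ..
      rw [e1]
    have hsplit : p.support = T ++ (Mid ++ D) := by
      rw [hTdef]
      conv_lhs => rw [← List.take_append_drop (i+1) p.support]
      congr 1
      rw [← hDrD, hMiddef, List.take_append_drop]
    have hndTMD := hsplit ▸ hnd
    rw [List.nodup_append, List.nodup_append] at hndTMD
    obtain ⟨hndT, ⟨hndMid, hndD, hdisjMidD⟩, hdisjT⟩ := hndTMD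
    have hc : (((T ++ M) ++ Mid.reverse) ++ D).Chain' G.Adj := by
      refine List.IsChain.append ?_ (hch.drop (j+1)) ?_
      · refine List.IsChain.append ?_ ?_ ?_
        · refine List.IsChain.append (hch.take (i+1)) hMc ?_
          intro a ha b hb
          rw [hTdef, my_getLast?_take _ _ hi] at ha
          rw [hMh] at hb
          simp only [Option.mem_def, Option.some.injEq] at ha hb
          rw [← ha, ← hb, hsi]
          exact hadjs₀.symm
        · rw [List.isChain_reverse]
          exact ((hch.drop (i+1)).take (d+1)).imp (fun a b hab => hab.symm)
        · intro a ha b hb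
          rw [List.getLast?_append_of_ne_nil _ hMne, hMl] at ha
          rw [List.head?_reverse, hMidlast] at hb
          simp only [Option.mem_def, Option.some.injEq] at ha hb
          rw [← ha, ← hb]
          exact hadjt₀
      · intro a ha b hb
        have hMidne : Mid ≠ [] := by
          apply List.ne_nil_of_length_pos
          rw [hMiddef, List.length_take]
          omega
        rw [List.getLast?_append_of_ne_nil _ (by simpa using hMidne),
          List.getLast?_reverse, hMidhead] at ha
        rw [hDdef, my_head?_drop _ _ hj1, ← hft] at hb
        simp only [Option.mem_def, Option.some.injEq] at ha hb
        rw [← ha, ← hb]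
        exact hadj
    have hndl : (((T ++ M) ++ Mid.reverse) ++ D).Nodup := by
      refine List.Nodup.append (List.Nodup.append (List.Nodup.append hndT hMnd ?_)
        (List.nodup_reverse.2 hndMid) ?_) hndD ?_
      · intro a ha hb
        exact hMdisj a hb (List.mem_of_mem_take ha)
      · intro a ha hb
        rw [List.mem_reverse] at hb
        rcases List.mem_append.1 ha with h1 | h1
        · exact hdisjT a h1 a (List.mem_append.2 (Or.inl hb)) rfl
        · exact hMdisj a h1 (List.mem_of_mem_drop (List.mem_of_mem_take hb))
      · intro a ha hb
        rcases List.mem_append.1 ha with h1 | h1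
        · rcases List.mem_append.1 h1 with h2 | h2
          · exact hdisjT a h2 a (List.mem_append.2 (Or.inr hb)) rfl
          · exact hMdisj a h2 (List.mem_of_mem_drop hb)
        · exact hdisjMidD a (List.mem_reverse.1 h1) a hb rfl
    have hlen := hKey _ (by
      intro he
      rw [List.append_eq_nil_iff, List.append_eq_nil_iff, List.append_eq_nil_iff] at he
      exact hMne he.1.1.2) hc hndl
    have hMlen : 1 ≤ M.length := List.length_pos_iff.2 hMne
    simp only [List.length_append, List.length_reverse, hTdef, hMiddef, hDrdef, hDdef,
      List.length_take, List.length_drop] at hlen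
    omega
  -- injectivity of f on S, and f s ≠ x
  have hfinj : ∀ s ∈ attachPoints G p C, ∀ t ∈ attachPoints G p C, f s = f t → s = t := by
    intro s hs t ht he
    rw [hf s hs, hf t ht] at he
    have := (List.Nodup.getElem_inj_iff hnd).1 he
    have h2 : p.support.idxOf s = p.support.idxOf t := by omega
    have h3 := hgetidx s hs
    have h4 := hgetidx t ht
    simp only [h2] at h3
    exact h3.symm.trans h4
  have hfx : ∀ s ∈ attachPoints G p C, f s ≠ x := by
    intro s hs he
    rw [hf s hs] at he
    have := (List.Nodup.getElem_inj_iff hnd).1 (he.trans h0.symm)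
    omega
  -- the set A
  set S' : Finset V := (Set.toFinite (attachPoints G p C)).toFinset with hS'def
  have hS'mem : ∀ s, s ∈ S' ↔ s ∈ attachPoints G p C := by
    intro s; rw [hS'def, Set.Finite.mem_toFinset]
  refine ⟨insert x (S'.image f), ?_, ?_, ?_, ?_⟩
  · -- independence
    intro a ha b hb hne hadj
    rcases Finset.mem_insert.1 ha with rfl | ha' <;>
      rcases Finset.mem_insert.1 hb with rfl | hb'
    · exact hne rfl
    · obtain ⟨t, ht, rfl⟩ := Finset.mem_image.1 hb'
      exact hxf t ((hS'mem t).1 ht) hadj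
    · obtain ⟨s, hs, rfl⟩ := Finset.mem_image.1 ha'
      exact hxf s ((hS'mem s).1 hs) hadj.symm
    · obtain ⟨s, hs, rfl⟩ := Finset.mem_image.1 ha'
      obtain ⟨t, ht, rfl⟩ := Finset.mem_image.1 hb'
      have hsS := (hS'mem s).1 hs
      have htS := (hS'mem t).1 ht
      have hst : s ≠ t := fun h => hne (by rw [h])
      have hij : p.support.idxOf s ≠ p.support.idxOf t := by
        intro h
        apply hst
        have h2 := hgetidx s hsS
        have h3 := hgetidx t htS
        simp only [h] at h2
        exact h2.symm.trans h3
      rcases Nat.lt_or_ge (p.support.idxOf s) (p.support.idxOf t) with h | h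
      · exact hff s hsS t htS h hadj
      · exact hff t htS s hsS (by omega) hadj.symm
  · -- A ⊆ support
    intro a ha
    rcases Finset.mem_insert.1 ha with rfl | ha'
    · exact p.start_mem_support
    · obtain ⟨s, hs, rfl⟩ := Finset.mem_image.1 ha'
      exact hfmem s ((hS'mem s).1 hs)
  · -- cardinality
    have hcard1 : (S'.image f).card = S'.card := by
      apply Finset.card_image_of_injOn
      intro s hs t ht he
      exact hfinj s ((hS'mem s).1 hs) t ((hS'mem t).1 ht) he
    have hxnot : x ∉ S'.image f := by
      intro hmem'
      obtain ⟨s, hs, he⟩ := Finset.mem_image.1 hmem'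
      exact hfx s ((hS'mem s).1 hs) he
    rw [Finset.card_insert_of_notMem hxnot, hcard1]
    have : (attachPoints G p C).ncard = S'.card := by
      rw [hS'def]
      exact Set.ncard_eq_toFinset_card _ _
    omega
  · -- no edges to C
    intro a ha h hC hadj
    rcases Finset.mem_insert.1 ha with rfl | ha'
    · exact hxC h hC hadj
    · obtain ⟨s, hs, rfl⟩ := Finset.mem_image.1 ha'
      exact hGood s ((hS'mem s).1 hs) h hC hadj
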